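/- arXiv:1011.0299 — 2 statements merged into one kernel-verified Lean document; each statement's English description precedes it below -/
import Mathlib

section
/- Let Λ(K) = −a log det(I_p − K) for Hermitian K < I_p (and Λ(K) = +∞ otherwise), where a > 0. Then the Legendre transform Λ*(X) = sup_{K Hermitian} (tr(KX) − Λ(K)) equals tr X − a log det X − ap(1 − log a) when X is positive definite, and Λ*(X) = +∞ when X is positive semidefinite Hermitian with det X = 0. -/
open scoped ComplexOrder

attribute [local instance] Classical.propDecidable

/-- The log-Laplace transform of the complex Wishart distribution `W_p(a)`:
`Λ(K) = -a log det(I - K)` for Hermitian `K < I`, and `+∞` otherwise. -/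
noncomputable def wishartLogLaplace (p : ℕ) (a : ℝ) (K : Matrix (Fin p) (Fin p) ℂ) : EReal :=
  if K.IsHermitian ∧ ((1 : Matrix (Fin p) (Fin p) ℂ) - K).PosDef then
    (((-a) * Real.log ((1 - K).det.re) : ℝ) : EReal)
  else ⊤

/-- The Legendre transform `Λ*(X) = sup_{K Hermitian} (tr(KX) - Λ(K))`. -/
noncomputable def wishartLegendre (p : ℕ) (a : ℝ) (X : Matrix (Fin p) (Fin p) ℂ) : EReal :=
  ⨆ K : {K : Matrix (Fin p) (Fin p) ℂ // K.IsHermitian},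
    ((((K : Matrix (Fin p) (Fin p) ℂ) * X).trace.re : ℝ) : EReal) - wishartLogLaplace p a K

namespace WishartAux

open Matrix

variable {n : Type*} [Fintype n] [DecidableEq n]

lemma trace_eq_sum {A : Matrix n n ℂ} (hA : A.IsHermitian) :
    A.trace = ∑ i, (hA.eigenvalues i : ℂ) := by
  conv_lhs => rw [hA.spectral_theorem]
  rw [Unitary.conjStarAlgAut_apply, Matrix.trace_mul_cycle, Unitary.coe_star_mul_self]
  simp [Matrix.trace_diagonal]

lemma det_re {M : Matrix n n ℂ} (hM : M.PosDef) :
    M.det = (M.det.re : ℂ) ∧ 0 < M.det.re := by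
  have h := hM.det_pos
  rw [Complex.lt_def] at h
  exact ⟨by simp [Complex.ext_iff, ← h.2], by simpa using h.1⟩

lemma key_ineq {a : ℝ} (ha : 0 < a) {M : Matrix n n ℂ} (hM : M.PosDef) :
    a * Real.log M.det.re + a * (Fintype.card n) - a * (Fintype.card n) * Real.log a
      ≤ M.trace.re := by
  have hev := hM.eigenvalues_pos
  have htr : M.trace.re = ∑ i, hM.1.eigenvalues i := by
    rw [trace_eq_sum hM.1, ← Complex.ofReal_sum, Complex.ofReal_re]
  have hdet : M.det.re = ∏ i, hM.1.eigenvalues i := by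
    rw [hM.1.det_eq_prod_eigenvalues]; norm_cast
  rw [htr, hdet, Real.log_prod (fun i _ => (hev i).ne')]
  calc a * ∑ i, Real.log (hM.1.eigenvalues i) + a * (Fintype.card n)
        - a * (Fintype.card n) * Real.log a
      = ∑ i, (a * Real.log (hM.1.eigenvalues i) + a - a * Real.log a) := by
        rw [Finset.sum_sub_distrib, Finset.sum_add_distrib, ← Finset.mul_sum,
          Finset.sum_const, Finset.sum_const, Finset.card_univ]
        push_cast
        ring
    _ ≤ ∑ i, hM.1.eigenvalues i := by
        refine Finset.sum_le_sum fun i _ => ?_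
        have h2 := Real.log_le_sub_one_of_pos (div_pos (hev i) ha)
        rw [Real.log_div (hev i).ne' ha.ne'] at h2
        have h4 : a * (Real.log (hM.1.eigenvalues i) - Real.log a)
            ≤ hM.1.eigenvalues i - a := by
          calc a * (Real.log (hM.1.eigenvalues i) - Real.log a)
              ≤ a * (hM.1.eigenvalues i / a - 1) := mul_le_mul_of_nonneg_left h2 ha.le
            _ = hM.1.eigenvalues i - a := by field_simp
        linarith

lemma conj_posDef {A B : Matrix n n ℂ} (hA : A.PosDef) (hB : IsUnit B.det) :
    (Bᴴ * A * B).PosDef := by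
  refine PosDef.of_dotProduct_mulVec_pos (isHermitian_conjTranspose_mul_mul B hA.1) fun x hx => ?_
  have hBx : B *ᵥ x ≠ 0 :=
    (Matrix.mulVec_injective_iff_isUnit.mpr ((Matrix.isUnit_iff_isUnit_det B).mpr hB)).ne_iff'
      (Matrix.mulVec_zero B) |>.2 hx
  simpa only [star_mulVec, dotProduct_mulVec, vecMul_vecMul] using hA.dotProduct_mulVec_pos hBx

omit [DecidableEq n] in
lemma smul_posDef {A : Matrix n n ℂ} (hA : A.PosDef) {c : ℝ} (hc : 0 < c) :
    ((c : ℂ) • A).PosDef := by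
  refine PosDef.of_dotProduct_mulVec_pos ?_ fun x hx => ?_
  · unfold Matrix.IsHermitian
    rw [Matrix.conjTranspose_smul, hA.1.eq]
    simp
  · rw [Matrix.smul_mulVec, dotProduct_smul]
    have := hA.dotProduct_mulVec_pos hx
    positivity

omit [DecidableEq n] in
lemma smul_posSemidef {A : Matrix n n ℂ} (hA : A.PosSemidef) {c : ℝ} (hc : 0 ≤ c) :
    ((c : ℂ) • A).PosSemidef := by
  refine PosSemidef.of_dotProduct_mulVec_nonneg ?_ fun x => ?_
  · unfold Matrix.IsHermitian
    rw [Matrix.conjTranspose_smul, hA.1.eq]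
    simp
  · rw [Matrix.smul_mulVec, dotProduct_smul]
    have := hA.dotProduct_mulVec_nonneg x
    positivity

omit [Fintype n] [DecidableEq n] in
lemma vecMulVec_herm (v : n → ℂ) : (vecMulVec v (star v)).IsHermitian := by
  ext i j
  simp [Matrix.conjTranspose_apply, Matrix.vecMulVec_apply, mul_comm]

omit [DecidableEq n] in
lemma vecMulVec_psd (v : n → ℂ) : (vecMulVec v (star v)).PosSemidef := by
  rw [vecMulVec_eq Unit, ← Matrix.conjTranspose_replicateCol]
  exact posSemidef_self_mul_conjTranspose _

omit [DecidableEq n] in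
lemma trace_vecMulVec_mul (v w : n → ℂ) (X : Matrix n n ℂ) :
    (vecMulVec v w * X).trace = w ⬝ᵥ (X *ᵥ v) := by
  simp only [Matrix.trace, Matrix.diag, Matrix.mul_apply, Matrix.vecMulVec_apply,
    Matrix.mulVec, dotProduct]
  rw [Finset.sum_comm]
  simp only [Finset.mul_sum]
  congr 1; ext j; congr 1; ext i; ring

lemma det_one_add_smul_vecMulVec (t : ℝ) (v : n → ℂ) :
    ((1 : Matrix n n ℂ) + (t : ℂ) • vecMulVec v (star v)).det
      = 1 + (t : ℂ) * (star v ⬝ᵥ v) := by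
  rw [vecMulVec_eq Unit, ← Matrix.smul_mul, ← Matrix.replicateCol_smul,
    Matrix.det_one_add_replicateCol_mul_replicateRow]
  rw [dotProduct_smul]
  simp [smul_eq_mul]

end WishartAux

open Matrix WishartAux

open scoped MatrixOrder Matrix.Norms.L2Operator

/-- The Legendre transform of the Wishart log-Laplace transform equals
`tr X - a log det X - a p (1 - log a)` for positive definite `X`, and `+∞` for
positive semidefinite `X` with `det X = 0`. -/
theorem wishartLegendre_eq {p : ℕ} (a : ℝ) (ha : 0 < a) (X : Matrix (Fin p) (Fin p) ℂ) :
    (X.PosDef →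
      wishartLegendre p a X =
        ((X.trace.re - a * Real.log X.det.re - a * p * (1 - Real.log a) : ℝ) : EReal)) ∧
    (X.PosSemidef ∧ X.det = 0 → wishartLegendre p a X = ⊤) := by
  constructor
  · intro hX
    obtain ⟨hXdet_eq, hXdet_pos⟩ := det_re hX
    have hXd0 : X.det ≠ 0 := hX.det_pos.ne'
    rw [wishartLegendre]
    apply le_antisymm
    · refine iSup_le fun K => ?_
      by_cases hH : ((1 : Matrix (Fin p) (Fin p) ℂ) - (K : Matrix (Fin p) (Fin p) ℂ)).PosDef
      · rw [wishartLogLaplace, if_pos ⟨K.2, hH⟩, ← EReal.coe_sub, EReal.coe_le_coe_iff]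
        set H := (1 : Matrix (Fin p) (Fin p) ℂ) - (K : Matrix (Fin p) (Fin p) ℂ) with hHdef
        obtain ⟨hHdet_eq, hHdet_pos⟩ := det_re hH
        set S := CFC.sqrt X with hSdef
        have hS := (CFC.sqrt_nonneg X).posSemidef
        have hSS : S * S = X := CFC.sqrt_mul_sqrt_self X hX.posSemidef.nonneg
        have hdS : IsUnit S.det := by
          refine isUnit_iff_ne_zero.2 fun h0 => hXd0 ?_
          rw [← hSS, Matrix.det_mul, h0, zero_mul]
        have hM : (Sᴴ * H * S).PosDef := conj_posDef hH hdS
        obtain ⟨hMdet_eq, hMdet_pos⟩ := det_re hM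
        have htrM : (Sᴴ * H * S).trace = (H * X).trace := by
          rw [Matrix.trace_mul_cycle, hS.1, hSS, Matrix.trace_mul_comm]
        have hdetM : (Sᴴ * H * S).det = H.det * X.det := by
          have hXdS : X.det = S.det * S.det := by rw [← hSS, Matrix.det_mul]
          rw [Matrix.det_mul, Matrix.det_mul, hS.1, hXdS]
          ring
        have hMre : (Sᴴ * H * S).det.re = H.det.re * X.det.re := by
          rw [hdetM, hHdet_eq, hXdet_eq]
          simp
        have hlogM : Real.log (Sᴴ * H * S).det.re
            = Real.log H.det.re + Real.log X.det.re := by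
          rw [hMre, Real.log_mul hHdet_pos.ne' hXdet_pos.ne']
        have hkey := key_ineq ha hM
        rw [Fintype.card_fin, hlogM] at hkey
        have htrK : ((K : Matrix (Fin p) (Fin p) ℂ) * X).trace.re
            = X.trace.re - (Sᴴ * H * S).trace.re := by
          have h1 : (K : Matrix (Fin p) (Fin p) ℂ) * X = X - H * X := by
            rw [hHdef, Matrix.sub_mul, Matrix.one_mul]
            abel
          rw [h1, Matrix.trace_sub, Complex.sub_re, htrM]
        rw [htrK]
        nlinarith [hkey]
      · rw [wishartLogLaplace, if_neg (fun hc => hH hc.2)]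
        have hb : ((((K : Matrix (Fin p) (Fin p) ℂ) * X).trace.re : ℝ) : EReal) - ⊤
            = (⊥ : EReal) := rfl
        rw [hb]
        exact bot_le
    · have hinv : (X⁻¹).PosDef := hX.inv
      have hXdu : IsUnit X.det := isUnit_iff_ne_zero.2 hXd0
      set K₀ := (1 : Matrix (Fin p) (Fin p) ℂ) - (a : ℂ) • X⁻¹ with hK₀
      have hherm : K₀.IsHermitian := by
        unfold Matrix.IsHermitian
        rw [hK₀, Matrix.conjTranspose_sub, Matrix.conjTranspose_smul, hX.1.inv.eq]
        simp [Complex.star_def, Complex.conj_ofReal]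
      have hsub : (1 : Matrix (Fin p) (Fin p) ℂ) - K₀ = (a : ℂ) • X⁻¹ :=
        sub_sub_cancel _ _
      have hpd : ((1 : Matrix (Fin p) (Fin p) ℂ) - K₀).PosDef := by
        rw [hsub]; exact smul_posDef hinv ha
      have hdet1 : ((1 : Matrix (Fin p) (Fin p) ℂ) - K₀).det
          = ((a ^ p / X.det.re : ℝ) : ℂ) := by
        rw [hsub, Matrix.det_smul, Fintype.card_fin, Matrix.det_nonsing_inv,
          Ring.inverse_eq_inv', hXdet_eq]
        push_cast
        simp [div_eq_mul_inv]
      have hre1 : ((1 : Matrix (Fin p) (Fin p) ℂ) - K₀).det.re = a ^ p / X.det.re := by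
        rw [hdet1, Complex.ofReal_re]
      have hlog1 : Real.log (((1 : Matrix (Fin p) (Fin p) ℂ) - K₀).det.re)
          = p * Real.log a - Real.log X.det.re := by
        rw [hre1, Real.log_div (pow_ne_zero p ha.ne') hXdet_pos.ne', Real.log_pow]
      have htr0 : (K₀ * X).trace.re = X.trace.re - a * p := by
        have h1 : K₀ * X = X - (a : ℂ) • (1 : Matrix (Fin p) (Fin p) ℂ) := by
          rw [hK₀, Matrix.sub_mul, Matrix.one_mul, Matrix.smul_mul,
            Matrix.nonsing_inv_mul X hXdu]
        rw [h1, Matrix.trace_sub, Matrix.trace_smul, Matrix.trace_one, Fintype.card_fin]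
        simp [smul_eq_mul, Complex.sub_re, Complex.mul_re]
      have hval : ((((K₀ : Matrix (Fin p) (Fin p) ℂ) * X).trace.re : ℝ) : EReal)
            - wishartLogLaplace p a K₀
          = ((X.trace.re - a * Real.log X.det.re - a * p * (1 - Real.log a) : ℝ) : EReal) := by
        rw [wishartLogLaplace, if_pos ⟨hherm, hpd⟩, ← EReal.coe_sub]
        norm_cast
        rw [htr0, hlog1]
        ring
      have hle := le_iSup (fun K : {K : Matrix (Fin p) (Fin p) ℂ // K.IsHermitian} =>
        ((((K : Matrix (Fin p) (Fin p) ℂ) * X).trace.re : ℝ) : EReal)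
          - wishartLogLaplace p a K) ⟨K₀, hherm⟩
      rw [hval] at hle
      exact hle
  · rintro ⟨hpsd, hdet0⟩
    obtain ⟨v, hv0, hXv⟩ := (Matrix.exists_mulVec_eq_zero_iff).2 hdet0
    have hs : (0 : ℂ) < star v ⬝ᵥ v := dotProduct_star_self_pos_iff.2 hv0
    rw [Complex.lt_def] at hs
    have hsre : 0 < (star v ⬝ᵥ v).re := by simpa using hs.1
    have hseq : (star v ⬝ᵥ v) = ((star v ⬝ᵥ v).re : ℂ) := by
      simp [Complex.ext_iff, ← hs.2]
    rw [wishartLegendre]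
    refine (EReal.eq_top_iff_forall_lt _).2 fun r => ?_
    set t := Real.exp ((r + 1) / a) / (star v ⬝ᵥ v).re with htdef
    have htpos : 0 < t := div_pos (Real.exp_pos _) hsre
    set K₁ := (-(t : ℂ)) • vecMulVec v (star v) with hK₁
    have hherm : K₁.IsHermitian := by
      unfold Matrix.IsHermitian
      rw [hK₁, Matrix.conjTranspose_smul, vecMulVec_herm v]
      norm_num [Complex.star_def, Complex.conj_ofReal]
    have hsub : (1 : Matrix (Fin p) (Fin p) ℂ) - K₁
        = 1 + (t : ℂ) • vecMulVec v (star v) := by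
      rw [hK₁, neg_smul, sub_neg_eq_add]
    have hpd : ((1 : Matrix (Fin p) (Fin p) ℂ) - K₁).PosDef := by
      rw [hsub]
      exact Matrix.PosDef.add_posSemidef Matrix.PosDef.one
        (smul_posSemidef (vecMulVec_psd v) htpos.le)
    have hdetre : ((1 : Matrix (Fin p) (Fin p) ℂ) - K₁).det.re
        = 1 + t * (star v ⬝ᵥ v).re := by
      rw [hsub, det_one_add_smul_vecMulVec, hseq]
      push_cast
      simp
    have htr : (K₁ * X).trace = 0 := by
      rw [hK₁, Matrix.smul_mul, Matrix.trace_smul, trace_vecMulVec_mul, hXv]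
      simp
    have hts : t * (star v ⬝ᵥ v).re = Real.exp ((r + 1) / a) := by
      rw [htdef, div_mul_cancel₀ _ hsre.ne']
    have hlogge : r + 1 ≤ a * Real.log (1 + t * (star v ⬝ᵥ v).re) := by
      have h1 : Real.log (Real.exp ((r + 1) / a))
          ≤ Real.log (1 + t * (star v ⬝ᵥ v).re) := by
        apply Real.log_le_log (Real.exp_pos _)
        rw [hts]
        linarith [Real.exp_pos ((r + 1) / a)]
      rw [Real.log_exp] at h1
      have h2 := mul_le_mul_of_nonneg_left h1 ha.le
      rwa [mul_div_cancel₀ _ ha.ne'] at h2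
    have hval : ((((K₁ : Matrix (Fin p) (Fin p) ℂ) * X).trace.re : ℝ) : EReal)
          - wishartLogLaplace p a K₁
        = ((a * Real.log (1 + t * (star v ⬝ᵥ v).re) : ℝ) : EReal) := by
      rw [wishartLogLaplace, if_pos ⟨hherm, hpd⟩, ← EReal.coe_sub]
      norm_cast
      rw [htr, hdetre]
      simp
    calc (r : EReal) < ((r + 1 : ℝ) : EReal) := by exact_mod_cast lt_add_one r
      _ ≤ ((a * Real.log (1 + t * (star v ⬝ᵥ v).re) : ℝ) : EReal) := by
          exact_mod_cast hlogge
      _ = _ := hval.symm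
      _ ≤ _ := le_iSup (fun K : {K : Matrix (Fin p) (Fin p) ℂ // K.IsHermitian} =>
          ((((K : Matrix (Fin p) (Fin p) ℂ) * X).trace.re : ℝ) : EReal)
            - wishartLogLaplace p a K) ⟨K₁, hherm⟩
end

section
/- If X is a positive semidefinite Hermitian p×p matrix with nontrivial kernel (det X = 0), then sup over Hermitian K < I_p of tr(KX) + a log det(I_p − K) is +∞, for any a > 0. -/
open scoped ComplexOrder Matrix

lemma vecMulVec_star_posSemidef {p : ℕ} (u : Fin p → ℂ) :
    (Matrix.vecMulVec u (star u)).PosSemidef := by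
  have h := Matrix.posSemidef_conjTranspose_mul_self (Matrix.replicateRow Unit (star u))
  rwa [Matrix.conjTranspose_replicateRow, star_star, ← Matrix.vecMulVec_eq] at h

lemma vecMulVec_mul_eq_zero {p : ℕ} (u : Fin p → ℂ) (X : Matrix (Fin p) (Fin p) ℂ)
    (hX : X.IsHermitian) (hXu : X *ᵥ u = 0) :
    Matrix.vecMulVec u (star u) * X = 0 := by
  ext i k
  have h0 : ∑ j, X k j * u j = 0 := congrFun hXu k
  simp only [Matrix.mul_apply, Matrix.vecMulVec_apply, Pi.star_apply, Matrix.zero_apply]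
  calc ∑ j, u i * star (u j) * X j k
      = u i * star (∑ j, X k j * u j) := by
        rw [star_sum, Finset.mul_sum]
        refine Finset.sum_congr rfl fun j _ => ?_
        have : star (X k j) = X j k := by
          conv_rhs => rw [← hX]
          simp [Matrix.conjTranspose_apply]
        rw [star_mul', this]
        ring
    _ = 0 := by rw [h0, star_zero, mul_zero]

/-- If `X` is positive semidefinite Hermitian with `det X = 0`, then the supremum over
Hermitian `K < I` of `tr(KX) + a log det(I - K)` is `+∞`, for any `a > 0`. -/
theorem sup_trace_add_logdet_eq_top {p : ℕ} (a : ℝ) (ha : 0 < a)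
    (X : Matrix (Fin p) (Fin p) ℂ) (hX : X.PosSemidef) (hdet : X.det = 0) :
    (⨆ K : {K : Matrix (Fin p) (Fin p) ℂ //
        K.IsHermitian ∧ ((1 : Matrix (Fin p) (Fin p) ℂ) - K).PosDef},
      ((((K : Matrix (Fin p) (Fin p) ℂ) * X).trace.re
          + a * Real.log ((1 - (K : Matrix (Fin p) (Fin p) ℂ)).det.re) : ℝ) : EReal)) = ⊤ := by
  rw [iSup_eq_top]
  intro b hb
  -- get a real number above b
  obtain ⟨r, hbr⟩ : ∃ r : ℝ, b ≤ (r : EReal) := by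
    induction b using EReal.rec with
    | bot => exact ⟨0, bot_le⟩
    | coe x => exact ⟨x, le_refl _⟩
    | top => exact absurd hb (lt_irrefl _)
  -- kernel vector
  obtain ⟨v, hv0, hXv⟩ := (Matrix.exists_mulVec_eq_zero_iff (M := X)).mpr hdet
  set s : ℝ := ∑ i, Complex.normSq (v i) with hs
  have hspos : 0 < s := by
    have : ∃ i, v i ≠ 0 := by
      by_contra h
      push_neg at h
      exact hv0 (funext h)
    obtain ⟨i, hi⟩ := this
    exact Finset.sum_pos' (fun j _ => Complex.normSq_nonneg _)
      ⟨i, Finset.mem_univ i, Complex.normSq_pos.mpr hi⟩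
  set c : ℝ := Real.exp (r / a) / s with hc
  have hcpos : 0 < c := div_pos (Real.exp_pos _) hspos
  set u : Fin p → ℂ := (Real.sqrt c : ℂ) • v with hu
  have hXu : X *ᵥ u = 0 := by
    rw [hu, Matrix.mulVec_smul, hXv, smul_zero]
  have hdot : star u ⬝ᵥ u = ((c * s : ℝ) : ℂ) := by
    have h1 : star v ⬝ᵥ v = ((s : ℝ) : ℂ) := by
      simp only [dotProduct, Pi.star_apply, hs]
      push_cast
      refine Finset.sum_congr rfl fun i _ => ?_
      simp [Complex.star_def, Complex.normSq_eq_conj_mul_self]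
    rw [hu]
    simp only [star_smul, smul_dotProduct, dotProduct_smul, smul_eq_mul]
    rw [h1]
    have hsq : (Real.sqrt c : ℂ) * (Real.sqrt c : ℂ) = (c : ℂ) := by
      rw [← Complex.ofReal_mul, Real.mul_self_sqrt hcpos.le]
    rw [Complex.star_def, Complex.conj_ofReal, ← mul_assoc, hsq, Complex.ofReal_mul]
  set W : Matrix (Fin p) (Fin p) ℂ := Matrix.vecMulVec u (star u) with hW
  have hWherm : W.IsHermitian := by
    ext i j
    simp [hW, Matrix.conjTranspose_apply, Matrix.vecMulVec_apply, mul_comm]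
  have hWpsd : W.PosSemidef := vecMulVec_star_posSemidef u
  have hdetW : ((1 : Matrix (Fin p) (Fin p) ℂ) + W).det = ((1 + c * s : ℝ) : ℂ) := by
    rw [hW, Matrix.vecMulVec_eq Unit, Matrix.det_one_add_replicateCol_mul_replicateRow, hdot]
    push_cast
    ring
  refine ⟨⟨-W, hWherm.neg, ?_⟩, ?_⟩
  · rw [sub_neg_eq_add]
    exact Matrix.PosDef.one.add_posSemidef hWpsd
  · have htr : ((-W) * X).trace = 0 := by
      rw [Matrix.neg_mul, vecMulVec_mul_eq_zero u X hX.1 hXu, neg_zero, Matrix.trace_zero]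
    have hdet2 : ((1 : Matrix (Fin p) (Fin p) ℂ) - -W).det.re = 1 + c * s := by
      rw [sub_neg_eq_add, hdetW, Complex.ofReal_re]
    refine lt_of_le_of_lt hbr ?_
    simp only [htr, Complex.zero_re, zero_add, hdet2]
    rw [EReal.coe_lt_coe_iff]
    have hlog : Real.log (Real.exp (r / a)) < Real.log (1 + c * s) := by
      refine Real.log_lt_log (Real.exp_pos _) ?_
      have : c * s = Real.exp (r / a) := by
        rw [hc, div_mul_cancel₀ _ hspos.ne']
      rw [this]
      linarith
    rw [Real.log_exp] at hlog
    calc r = a * (r / a) := by field_simp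
      _ < a * Real.log (1 + c * s) := by
          exact mul_lt_mul_of_pos_left hlog ha
end
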